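/- Let K be a field, k ≥ 2, with recurrence data α_j, β_j, γ_j ∈ K, α_j ≠ 0, defining the polynomials φ_j as usual. Fix λ_0 ∈ K, let D_i ∈ K^{m×m} (i = 0,…,k), D_0^{ev} := Σ_{i=0}^{k} D_i φ_i(λ_0), let A ∈ K^{n×n}, B ∈ K^{n×m}, C ∈ K^{m×n}, and let X, Y ∈ K^{n×n} and K_0 := [v⊗I_m, H] ∈ K^{km×km} (v ∈ K^k, H ∈ K^{km×(k−1)m}) all be invertible, and assume λ_0I_n − A is invertible. Set G_0 := D_0^{ev} + C(λ_0I_n−A)^{−1}B, L_0 := K_0·F_Φ^D(λ_0), and 𝓛_0 := [[X(λ_0I_n−A)Y, [0_{n×(k−1)m}, XB]], [−(v⊗I_m)CY, L_0]]. If (y;x)^T·𝓛_0 = 0 with (y;x) ≠ 0, where y ∈ K^n and x ∈ K^{km}, then (v^T⊗I_m)x ≠ 0 and ((v^T⊗I_m)x)^T·G_0 = 0. -/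
import Mathlib


open Matrix

/-- The matrix `v ⊗ I_m ∈ R^{km×m}` built from a vector `v ∈ R^k`. -/
def vKron {R : Type*} [Semiring R] (k m : ℕ) (v : Fin k → R) :
    Matrix (Fin k × Fin m) (Fin m) R :=
  Matrix.of fun p j => if p.2 = j then v p.1 else 0

/-- Evaluation of the pencil `M_Φ(λ) ∈ F[λ]^{(k-1)×k}` at `λ₀`. -/
noncomputable def MPhiEval {K : Type*} [Field K] (α β γ : ℕ → K) (k : ℕ) (lam0 : K) :
    Matrix (Fin (k - 1)) (Fin k) K :=
  Matrix.of fun i j =>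
    if (j : ℕ) = (i : ℕ) then -(α (k - 2 - (i : ℕ)))
    else if (j : ℕ) = (i : ℕ) + 1 then lam0 - β (k - 2 - (i : ℕ))
    else if (j : ℕ) = (i : ℕ) + 2 then -(γ (k - 2 - (i : ℕ)))
    else 0

/-- Evaluation of the block row `m_Φ^D(λ) ∈ F[λ]^{m×km}` at `λ₀`. -/
noncomputable def mPhiEval {K : Type*} [Field K] (α β γ : ℕ → K) (k m : ℕ)
    (D : ℕ → Matrix (Fin m) (Fin m) K) (lam0 : K) :
    Matrix (Fin m) (Fin k × Fin m) K :=
  Matrix.of fun r c =>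
    if (c.1 : ℕ) = 0 then
      (α (k - 1))⁻¹ * (lam0 - β (k - 1)) * D k r c.2 + D (k - 1) r c.2
    else if (c.1 : ℕ) = 1 then
      D (k - 2) r c.2 - (α (k - 1))⁻¹ * γ (k - 1) * D k r c.2
    else D (k - 1 - (c.1 : ℕ)) r c.2

/-- Evaluation of the pencil `F_Φ^D(λ) = [m_Φ^D(λ); M_Φ(λ) ⊗ I_m]` at `λ₀`. -/
noncomputable def FPhiEval {K : Type*} [Field K] (α β γ : ℕ → K) (k m : ℕ)
    (D : ℕ → Matrix (Fin m) (Fin m) K) (lam0 : K) :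
    Matrix (Fin k × Fin m) (Fin k × Fin m) K :=
  Matrix.of fun p q =>
    if h : (p.1 : ℕ) = 0 then mPhiEval α β γ k m D lam0 p.2 q
    else
      MPhiEval α β γ k lam0 ⟨(p.1 : ℕ) - 1, by have := p.1.isLt; omega⟩ q.1
        * (if p.2 = q.2 then 1 else 0)

/-- The constant `km × km` matrix `[v ⊗ I_m, H]`. -/
def concatKron {K : Type*} [Field K] (k m : ℕ) (v : Fin k → K)
    (H : Matrix (Fin k × Fin m) (Fin (k - 1) × Fin m) K) :
    Matrix (Fin k × Fin m) (Fin k × Fin m) K :=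
  Matrix.of fun p q =>
    if h : (q.1 : ℕ) = 0 then (if p.2 = q.2 then v p.1 else 0)
    else H p (⟨(q.1 : ℕ) - 1, by have := q.1.isLt; omega⟩, q.2)

lemma Mrow_sum {K : Type*} [Field K] (α β γ : ℕ → K) (k : ℕ) (lam0 : K) (ψ : ℕ → K)
    (hψrec : ∀ j : ℕ, α j * ψ (j + 1)
      = (lam0 - β j) * ψ j - γ j * (if j = 0 then 0 else ψ (j - 1)))
    (i : ℕ) (hi : i < k - 1) (hk : 2 ≤ k) :
    ∑ c ∈ Finset.range k,
      (if c = i then -(α (k - 2 - i)) else if c = i + 1 then lam0 - β (k - 2 - i)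
       else if c = i + 2 then -(γ (k - 2 - i)) else 0) * ψ (k - 1 - c) = 0 := by
  have hsplit : ∀ c ∈ Finset.range k,
      (if c = i then -(α (k - 2 - i)) else if c = i + 1 then lam0 - β (k - 2 - i)
       else if c = i + 2 then -(γ (k - 2 - i)) else 0) * ψ (k - 1 - c)
      = (if c = i then -(α (k - 2 - i)) * ψ (k - 1 - i) else 0)
        + (if c = i + 1 then (lam0 - β (k - 2 - i)) * ψ (k - 2 - i) else 0)
        + (if c = i + 2 then -(γ (k - 2 - i)) * ψ (k - 3 - i) else 0) := by
    intro c _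
    rcases eq_or_ne c i with rfl | h1
    · simp [(show ∀ a:ℕ, a ≠ a+1 from fun a => by omega), (show ∀ a:ℕ, a ≠ a+2 from fun a => by omega)]
    · rcases eq_or_ne c (i + 1) with rfl | h2
      · have : i + 1 ≠ i := by omega
        have e : k - 1 - (i + 1) = k - 2 - i := by omega
        simp [this, e, (by omega : i + 1 ≠ i + 2)]
      · rcases eq_or_ne c (i + 2) with rfl | h3
        · have e : k - 1 - (i + 2) = k - 3 - i := by omega
          simp [(by omega : i + 2 ≠ i), (by omega : i + 2 ≠ i + 1), e]
        · simp [h1, h2, h3]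
  rw [Finset.sum_congr rfl hsplit]
  rw [Finset.sum_add_distrib, Finset.sum_add_distrib,
    Finset.sum_ite_eq' (Finset.range k) i, Finset.sum_ite_eq' (Finset.range k) (i+1),
    Finset.sum_ite_eq' (Finset.range k) (i+2)]
  rw [if_pos (Finset.mem_range.mpr (by omega)), if_pos (Finset.mem_range.mpr (by omega))]
  rcases Nat.lt_or_ge i (k - 2) with h | h
  · rw [if_pos (Finset.mem_range.mpr (by omega))]
    have hr := hψrec (k - 2 - i)
    rw [if_neg (by omega)] at hr
    rw [show k - 1 - i = (k - 2 - i) + 1 from by omega,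
        show k - 3 - i = (k - 2 - i) - 1 from by omega]
    linear_combination -hr
  · rw [if_neg (by simp [Finset.mem_range]; omega)]
    have hie : i = k - 2 := by omega
    have hr := hψrec (k - 2 - i)
    rw [if_pos (by omega)] at hr
    rw [show k - 1 - i = (k - 2 - i) + 1 from by omega]
    linear_combination -hr

lemma mrow_sum {K : Type*} [Field K] (α β γ : ℕ → K) (k : ℕ) (hk : 2 ≤ k) (lam0 : K)
    (hα : α (k - 1) ≠ 0) (ψ d : ℕ → K)
    (hψrec : ∀ j : ℕ, α j * ψ (j + 1)
      = (lam0 - β j) * ψ j - γ j * (if j = 0 then 0 else ψ (j - 1))) :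
    ∑ c ∈ Finset.range k,
      (if c = 0 then (α (k - 1))⁻¹ * (lam0 - β (k - 1)) * d k + d (k - 1)
       else if c = 1 then d (k - 2) - (α (k - 1))⁻¹ * γ (k - 1) * d k
       else d (k - 1 - c)) * ψ (k - 1 - c)
    = ∑ i ∈ Finset.range (k + 1), ψ i * d i := by
  obtain ⟨k', rfl⟩ : ∃ k', k = k' + 2 := ⟨k - 2, by omega⟩
  rw [Finset.sum_range_succ', Finset.sum_range_succ']
  have hmid : ∀ i ∈ Finset.range k',
      (if i + 1 + 1 = 0 then (α (k' + 2 - 1))⁻¹ * (lam0 - β (k' + 2 - 1)) * d (k' + 2) + d (k' + 2 - 1)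
       else if i + 1 + 1 = 1 then d (k' + 2 - 2) - (α (k' + 2 - 1))⁻¹ * γ (k' + 2 - 1) * d (k' + 2)
       else d (k' + 2 - 1 - (i + 1 + 1))) * ψ (k' + 2 - 1 - (i + 1 + 1))
      = (fun j => d j * ψ j) (k' - 1 - i) := by
    intro i _
    have e : k' + 2 - 1 - (i + 1 + 1) = k' - 1 - i := by omega
    simp only [e]
    rw [if_neg (by omega), if_neg (by omega)]
  rw [Finset.sum_congr rfl hmid, Finset.sum_range_reflect (fun j => d j * ψ j) k']
  rw [Finset.sum_range_succ, Finset.sum_range_succ, Finset.sum_range_succ]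
  have hr := hψrec (k' + 1)
  rw [if_neg (by omega)] at hr
  have hψk : ψ (k' + 2) = (α (k' + 1))⁻¹ * ((lam0 - β (k' + 1)) * ψ (k' + 1) - γ (k' + 1) * ψ k') := by
    have hα' : α (k' + 1) ≠ 0 := by simpa using hα
    rw [Nat.add_sub_cancel] at hr
    field_simp
    linear_combination hr
  have : ∑ j ∈ Finset.range k', d j * ψ j = ∑ i ∈ Finset.range k', ψ i * d i := by
    exact Finset.sum_congr rfl fun i _ => mul_comm _ _
  rw [this, hψk]
  norm_num
  ring

lemma FPhiEval_mul_W {K : Type*} [Field K] {m k : ℕ} (hk : 2 ≤ k)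
    (α β γ : ℕ → K) (hα : α (k - 1) ≠ 0) (lam0 : K)
    (D : ℕ → Matrix (Fin m) (Fin m) K) (ψ : ℕ → K)
    (hψrec : ∀ j : ℕ, α j * ψ (j + 1)
      = (lam0 - β j) * ψ j - γ j * (if j = 0 then 0 else ψ (j - 1))) :
    FPhiEval α β γ k m D lam0 *
      (Matrix.of fun (p : Fin k × Fin m) (j : Fin m) => if p.2 = j then ψ (k - 1 - (p.1 : ℕ)) else 0)
    = Matrix.of fun (p : Fin k × Fin m) (j : Fin m) =>
        if (p.1 : ℕ) = 0 then ∑ i ∈ Finset.range (k + 1), ψ i * D i p.2 j else 0 := by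
  ext ⟨a, r⟩ j
  rw [Matrix.mul_apply, Fintype.sum_prod_type]
  have hinner : ∀ c : Fin k,
      (∑ b : Fin m, FPhiEval α β γ k m D lam0 (a, r) (c, b) *
        (Matrix.of fun (p : Fin k × Fin m) (j : Fin m) => if p.2 = j then ψ (k - 1 - (p.1:ℕ)) else 0) (c, b) j)
      = FPhiEval α β γ k m D lam0 (a, r) (c, j) * ψ (k - 1 - (c : ℕ)) := by
    intro c
    rw [Finset.sum_eq_single j]
    · simp
    · intro b _ hb
      simp [Matrix.of_apply, hb]
    · simp
  rw [Finset.sum_congr rfl (fun c _ => hinner c)]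
  by_cases h0 : (a : ℕ) = 0
  · simp only [FPhiEval, Matrix.of_apply, dif_pos h0, mPhiEval]
    rw [Fin.sum_univ_eq_sum_range (fun c =>
      (if c = 0 then (α (k - 1))⁻¹ * (lam0 - β (k - 1)) * D k r j + D (k - 1) r j
       else if c = 1 then D (k - 2) r j - (α (k - 1))⁻¹ * γ (k - 1) * D k r j
       else D (k - 1 - c) r j) * ψ (k - 1 - c)) k]
    rw [mrow_sum α β γ k hk lam0 hα ψ (fun i => D i r j) hψrec]
    rw [if_pos h0]
  · simp only [FPhiEval, Matrix.of_apply, dif_neg h0, MPhiEval, if_neg h0]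
    rcases eq_or_ne r j with rfl | hrj
    · simp only [eq_self_iff_true, if_true, mul_one]
      rw [Fin.sum_univ_eq_sum_range (fun c =>
        (if c = (↑a - 1 : ℕ) then -(α (k - 2 - ((↑a:ℕ) - 1)))
         else if c = ((↑a:ℕ) - 1) + 1 then lam0 - β (k - 2 - ((↑a:ℕ) - 1))
         else if c = ((↑a:ℕ) - 1) + 2 then -(γ (k - 2 - ((↑a:ℕ) - 1)))
         else 0) * ψ (k - 1 - c)) k]
      exact Mrow_sum α β γ k lam0 ψ hψrec ((a:ℕ) - 1) (by have := a.isLt; omega) hk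
    · simp [hrj]
lemma F_left_inj {K : Type*} [Field K] {m k : ℕ} (hk : 2 ≤ k)
    (α β γ : ℕ → K) (hα : ∀ j, α j ≠ 0) (lam0 : K)
    (D : ℕ → Matrix (Fin m) (Fin m) K) (w : Fin k × Fin m → K)
    (hw0 : ∀ p : Fin k × Fin m, (p.1 : ℕ) = 0 → w p = 0)
    (h : w ᵥ* FPhiEval α β γ k m D lam0 = 0) : w = 0 := by
  have key : ∀ c : ℕ, ∀ p : Fin k × Fin m, (p.1 : ℕ) ≤ c → w p = 0 := by
    intro c
    induction c with
    | zero => exact fun p hp => hw0 p (Nat.le_zero.mp hp)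
    | succ c ih =>
      intro p hp
      rcases Nat.lt_succ_iff_lt_or_eq.mp (Nat.lt_succ_of_le hp) with h' | h'
      · exact ih p (by omega)
      · -- (p.1 : ℕ) = c + 1
        have hck : c + 1 < k := h' ▸ p.1.isLt
        have hcol := congrFun h ((⟨c, by omega⟩ : Fin k), p.2)
        simp only [Pi.zero_apply, Matrix.vecMul, dotProduct] at hcol
        rw [Finset.sum_eq_single p] at hcol
        · -- evaluate F p (⟨c⟩, p.2)
          have hF : FPhiEval α β γ k m D lam0 p ((⟨c, by omega⟩ : Fin k), p.2)
              = -(α (k - 2 - c)) := by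
            simp only [FPhiEval, Matrix.of_apply, dif_neg (by omega : ¬ (p.1 : ℕ) = 0)]
            simp only [MPhiEval, Matrix.of_apply]
            rw [if_pos (by simp [h'])]
            have e : (p.1 : ℕ) - 1 = c := by omega
            simp [e]
          rw [hF] at hcol
          have := hα (k - 2 - c)
          have hwp : w p * -(α (k - 2 - c)) = 0 := hcol
          rcases mul_eq_zero.mp hwp with h1 | h1
          · exact h1
          · exact absurd (neg_eq_zero.mp h1) this
        · intro b _ hbp
          by_cases hb1 : (b.1 : ℕ) ≤ c
          · rw [ih b hb1, zero_mul]
          · have hbc : (b.1 : ℕ) ≥ c + 1 := by omega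
            have hb0 : (b.1 : ℕ) ≠ 0 := by omega
            simp only [FPhiEval, Matrix.of_apply, dif_neg hb0, MPhiEval]
            rcases Nat.lt_or_ge (c + 1) (b.1 : ℕ) with hgt | hle
            · -- b.1 - 1 > c : all conditions fail
              rw [if_neg (by omega), if_neg (by omega), if_neg (by omega)]
              ring
            · -- b.1 = c + 1, so b.2 ≠ p.2
              have hb1' : (b.1 : ℕ) = c + 1 := by omega
              have : b.2 ≠ p.2 := by
                intro he
                apply hbp
                have : b.1 = p.1 := Fin.ext (by omega)
                exact Prod.ext this he
              rw [if_neg this]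
              ring
        · intro hnp
          exact absurd (Finset.mem_univ p) hnp
  ext p
  exact key (p.1 : ℕ) p le_rfl

lemma vecMul_eq_zero_of_isUnit {K : Type*} [Field K] {ι : Type*} [Fintype ι] [DecidableEq ι]
    (M : Matrix ι ι K) (hM : IsUnit M.det) (a : ι → K) (h : a ᵥ* M = 0) : a = 0 := by
  have h2 := congrArg (· ᵥ* M⁻¹) h
  simpa [Matrix.vecMul_vecMul, Matrix.mul_nonsing_inv M hM] using h2

lemma Q_mul_W {K : Type*} [Field K] {m n k : ℕ} (hk : 2 ≤ k) (ψ : ℕ → K) (hψ0 : ψ 0 = 1)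
    (M : Matrix (Fin n) (Fin m) K) :
    (Matrix.of fun (r : Fin n) (q : Fin k × Fin m) => if (q.1 : ℕ) = k - 1 then M r q.2 else 0) *
      (Matrix.of fun (p : Fin k × Fin m) (j : Fin m) => if p.2 = j then ψ (k - 1 - (p.1 : ℕ)) else 0)
    = M := by
  ext r j
  rw [Matrix.mul_apply]
  rw [Finset.sum_eq_single ((⟨k - 1, by omega⟩ : Fin k), j)]
  · simp [hψ0]
  · intro b _ hb
    by_cases hb1 : (b.1 : ℕ) = k - 1
    · have hb2 : b.2 ≠ j := fun he => hb (Prod.ext (Fin.ext (by simp [hb1])) he)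
      simp [hb2]
    · simp [hb1]
  · simp

lemma K0_mul_E {K : Type*} [Field K] {m k : ℕ} (hk : 2 ≤ k) (v : Fin k → K)
    (H : Matrix (Fin k × Fin m) (Fin (k - 1) × Fin m) K) (N : Matrix (Fin m) (Fin m) K) :
    concatKron k m v H * (Matrix.of fun (p : Fin k × Fin m) (j : Fin m) =>
      if (p.1 : ℕ) = 0 then N p.2 j else 0)
    = vKron k m v * N := by
  ext p j
  rw [Matrix.mul_apply, Matrix.mul_apply]
  rw [Finset.sum_eq_single ((⟨0, by omega⟩ : Fin k), p.2),
      Finset.sum_eq_single p.2]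
  · simp [concatKron, vKron]
  · intro b _ hb
    simp [vKron, hb.symm]
  · simp
  · intro b _ hb
    by_cases hb1 : (b.1 : ℕ) = 0
    · have hb2 : b.2 ≠ p.2 := fun he => hb (Prod.ext (Fin.ext (by simp [hb1])) he)
      simp [concatKron, hb1, Ne.symm hb2]
    · simp [hb1]
  · simp

/-- Recovery of left eigenvectors of a rational matrix from those of an
`𝕄₁`-strong linearization, evaluated at `λ₀` with `det(λ₀I_n − A) ≠ 0`: if
`(y;x)ᵀ 𝓛₀ = 0` with `(y;x) ≠ 0`, then `(vᵀ⊗I_m)x ≠ 0` and `((vᵀ⊗I_m)x)ᵀ G₀ = 0`. -/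
theorem recovery_left_eigenvectors_M1
    {K : Type*} [Field K] {m n k : ℕ} (hk : 2 ≤ k)
    (α β γ : ℕ → K) (hα : ∀ j, α j ≠ 0) (lam0 : K)
    (D : ℕ → Matrix (Fin m) (Fin m) K)
    (A X Y : Matrix (Fin n) (Fin n) K) (B : Matrix (Fin n) (Fin m) K)
    (C : Matrix (Fin m) (Fin n) K)
    (v : Fin k → K) (H : Matrix (Fin k × Fin m) (Fin (k - 1) × Fin m) K)
    (hX : IsUnit X.det) (hY : IsUnit Y.det)
    (hK0 : IsUnit (concatKron k m v H).det)
    (Λ₀ : Matrix (Fin n) (Fin n) K)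
    (hΛ₀ : Λ₀ = Matrix.diagonal (fun _ => lam0) - A)
    (hAreg : IsUnit Λ₀.det)
    (ψ : ℕ → K) (hψ0 : ψ 0 = 1)
    (hψrec : ∀ j : ℕ, α j * ψ (j + 1)
      = (lam0 - β j) * ψ j - γ j * (if j = 0 then 0 else ψ (j - 1)))
    (G₀ : Matrix (Fin m) (Fin m) K)
    (hG₀ : G₀ = (∑ i ∈ Finset.range (k + 1), ψ i • D i) + C * Λ₀⁻¹ * B)
    (L₀ : Matrix (Fin k × Fin m) (Fin k × Fin m) K)
    (hL₀ : L₀ = concatKron k m v H * FPhiEval α β γ k m D lam0)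
    (𝓛₀ : Matrix (Fin n ⊕ (Fin k × Fin m)) (Fin n ⊕ (Fin k × Fin m)) K)
    (h𝓛₀ : 𝓛₀ = Matrix.fromBlocks (X * Λ₀ * Y)
        (Matrix.of fun r (q : Fin k × Fin m) =>
          if (q.1 : ℕ) = k - 1 then (X * B) r q.2 else 0)
        (-(vKron k m v * C * Y)) L₀) :
    ∀ (y : Fin n → K) (x : Fin k × Fin m → K),
      Sum.elim y x ᵥ* 𝓛₀ = 0 → Sum.elim y x ≠ 0 →
        (vKron k m v)ᵀ *ᵥ x ≠ 0 ∧ ((vKron k m v)ᵀ *ᵥ x) ᵥ* G₀ = 0 := by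
  intro y x hzero hne
  subst h𝓛₀ hL₀ hG₀
  rw [Matrix.vecMul_fromBlocks] at hzero
  have h1 : y ᵥ* (X * Λ₀ * Y) + x ᵥ* (-(vKron k m v * C * Y)) = 0 :=
    funext fun i => congrFun hzero (Sum.inl i)
  have h2 : y ᵥ* (Matrix.of fun r (q : Fin k × Fin m) =>
        if (q.1 : ℕ) = k - 1 then (X * B) r q.2 else 0)
      + x ᵥ* (concatKron k m v H * FPhiEval α β γ k m D lam0) = 0 :=
    funext fun q => congrFun hzero (Sum.inr q)
  set u := x ᵥ* vKron k m v with hudef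
  have hu : (vKron k m v)ᵀ *ᵥ x = u := Matrix.mulVec_transpose _ x
  rw [hu]
  -- step1 : y ᵥ* (X * Λ₀) = u ᵥ* C
  have step1 : y ᵥ* (X * Λ₀) = u ᵥ* C := by
    have hz : (y ᵥ* (X * Λ₀) - u ᵥ* C) ᵥ* Y = 0 := by
      rw [Matrix.sub_vecMul, Matrix.vecMul_vecMul, Matrix.vecMul_vecMul, hudef,
        Matrix.vecMul_vecMul, ← Matrix.mul_assoc]
      rw [Matrix.vecMul_neg] at h1
      linear_combination h1
    exact sub_eq_zero.mp (vecMul_eq_zero_of_isUnit Y hY _ hz)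
  -- the key vector W
  set W : Matrix (Fin k × Fin m) (Fin m) K :=
    Matrix.of fun (p : Fin k × Fin m) (j : Fin m) =>
      if p.2 = j then ψ (k - 1 - (p.1 : ℕ)) else 0 with hW
  set DevMat : Matrix (Fin m) (Fin m) K := ∑ i ∈ Finset.range (k + 1), ψ i • D i with hDev
  have hFW : FPhiEval α β γ k m D lam0 * W =
      Matrix.of fun (p : Fin k × Fin m) (j : Fin m) =>
        if (p.1 : ℕ) = 0 then DevMat p.2 j else 0 := by
    rw [hW, FPhiEval_mul_W hk α β γ (hα (k - 1)) lam0 D ψ hψrec]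
    ext p j
    simp [hDev, Matrix.sum_apply]
  -- multiply h2 on the right by W
  have h2W : y ᵥ* (X * B) + u ᵥ* DevMat = 0 := by
    have := congrArg (· ᵥ* W) h2
    simp only [Matrix.add_vecMul, Matrix.zero_vecMul, Matrix.vecMul_vecMul] at this
    rw [Matrix.mul_assoc, hFW, K0_mul_E hk v H DevMat, hW, Q_mul_W hk ψ hψ0 (X * B)] at this
    rw [hudef, Matrix.vecMul_vecMul]
    exact this
  constructor
  · -- u ≠ 0
    intro hu0
    have hy : y = 0 := by
      apply vecMul_eq_zero_of_isUnit (X * Λ₀) (by rw [Matrix.det_mul]; exact hX.mul hAreg)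
      rw [step1, hu0, Matrix.zero_vecMul]
    have hxK : x ᵥ* concatKron k m v H = 0 := by
      apply F_left_inj hk α β γ hα lam0 D
      · intro p hp
        have : (x ᵥ* concatKron k m v H) p = u p.2 := by
          simp only [hudef, Matrix.vecMul, dotProduct, concatKron, vKron, Matrix.of_apply,
            dif_pos hp]
        rw [this, hu0, Pi.zero_apply]
      · rw [Matrix.vecMul_vecMul]
        rw [hy, Matrix.zero_vecMul, zero_add] at h2
        exact h2
    have hx : x = 0 := vecMul_eq_zero_of_isUnit _ hK0 x hxK
    apply hne
    funext i
    cases i with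
    | inl i => simp [hy]
    | inr q => simp [hx]
  · -- u ᵥ* G₀ = 0
    have hCB : u ᵥ* (C * Λ₀⁻¹ * B) = y ᵥ* (X * B) := by
      have e2 : (y ᵥ* (X * Λ₀)) ᵥ* Λ₀⁻¹ = y ᵥ* X := by
        rw [Matrix.vecMul_vecMul, Matrix.mul_nonsing_inv_cancel_right _ _ hAreg]
      calc u ᵥ* (C * Λ₀⁻¹ * B) = ((u ᵥ* C) ᵥ* Λ₀⁻¹) ᵥ* B := by
              simp only [Matrix.vecMul_vecMul, Matrix.mul_assoc]
        _ = ((y ᵥ* (X * Λ₀)) ᵥ* Λ₀⁻¹) ᵥ* B := by rw [step1]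
        _ = (y ᵥ* X) ᵥ* B := by rw [e2]
        _ = y ᵥ* (X * B) := Matrix.vecMul_vecMul _ _ _
    rw [Matrix.vecMul_add, hCB]
    linear_combination h2W
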